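/- arXiv:math/0102177 — 4 statements merged into one kernel-verified Lean document; each statement's English description precedes it below -/
import Mathlib

section
/- In the braid group B_n with band generator presentation, for all band generators (i,j) with n ≥ i > j ≥ 1, conjugation by the braid δ = (n,n-1)(n-1,n-2)···(2,1) satisfies δ^{-1}(i,j)δ = (i+1,j+1), where indices are taken modulo n (with representatives in {1,...,n}, and the pair reordered to be decreasing). -/
/-- Artin relations for the braid group `B_n`, with generators `σ_1, …, σ_{n-1}`
(indexed by natural numbers; generators with index `0` or `≥ n` are killed). -/
def braidRels (n : ℕ) : Set (FreeGroup ℕ) :=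
  {x | (∃ i j : ℕ, 1 ≤ i ∧ i + 2 ≤ j ∧ j + 1 ≤ n ∧
        x = FreeGroup.of i * FreeGroup.of j * (FreeGroup.of i)⁻¹ * (FreeGroup.of j)⁻¹) ∨
      (∃ i : ℕ, 1 ≤ i ∧ i + 2 ≤ n ∧
        x = FreeGroup.of i * FreeGroup.of (i+1) * FreeGroup.of i *
            (FreeGroup.of (i+1) * FreeGroup.of i * FreeGroup.of (i+1))⁻¹) ∨
      (∃ i : ℕ, (i = 0 ∨ n ≤ i) ∧ x = FreeGroup.of i)}

/-- The braid group `B_n` with the Artin presentation. -/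
def BraidGroup (n : ℕ) : Type := PresentedGroup (braidRels n)

instance (n : ℕ) : Group (BraidGroup n) :=
  inferInstanceAs (Group (PresentedGroup (braidRels n)))

/-- The Artin generator `σ_k` of `B_n`. -/
def σb (n k : ℕ) : BraidGroup n := PresentedGroup.of (rels := braidRels n) k

/-- The product `σ_{i-1} σ_{i-2} ⋯ σ_{j+1}` in `B_n`. -/
def chain (n i j : ℕ) : BraidGroup n :=
  ((List.range' (j+1) (i-1-j)).reverse.map (σb n)).prod

/-- The band generator `(i,j) = (σ_{i-1} ⋯ σ_{j+1}) σ_j (σ_{i-1} ⋯ σ_{j+1})⁻¹` of `B_n`. -/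
def band (n i j : ℕ) : BraidGroup n := chain n i j * σb n j * (chain n i j)⁻¹

/-- The braid `δ = σ_{n-1} σ_{n-2} ⋯ σ_1 = (n,n-1)(n-1,n-2)⋯(2,1)` in `B_n`. -/
def bdelta (n : ℕ) : BraidGroup n := ((List.range' 1 (n-1)).reverse.map (σb n)).prod

/- ### Auxiliary development -/

lemma braid_rel_one {n : ℕ} {x : FreeGroup ℕ} (hx : x ∈ braidRels n) :
    (PresentedGroup.mk (braidRels n) x : BraidGroup n) = 1 :=
  (QuotientGroup.eq_one_iff x).mpr (Subgroup.subset_normalClosure hx)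

lemma σb_eq_mk (n k : ℕ) : σb n k = PresentedGroup.mk (braidRels n) (FreeGroup.of k) := rfl

/-- Braid relation in `B_n`. -/
lemma braid_rel (n i : ℕ) (h1 : 1 ≤ i) (h2 : i + 2 ≤ n) :
    σb n i * σb n (i+1) * σb n i = σb n (i+1) * σb n i * σb n (i+1) := by
  have h := braid_rel_one (n := n) (Or.inr (Or.inl ⟨i, h1, h2, rfl⟩))
  simp only [map_mul, map_inv, ← σb_eq_mk] at h
  exact mul_inv_eq_one.mp h

/-- Commutation relation in `B_n`, symmetric form. -/
lemma sigma_comm (n a b : ℕ) (ha1 : 1 ≤ a) (hb1 : 1 ≤ b) (han : a + 1 ≤ n)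
    (hbn : b + 1 ≤ n) (h : a + 2 ≤ b ∨ b + 2 ≤ a) :
    σb n a * σb n b = σb n b * σb n a := by
  rcases h with h | h
  · have hc := braid_rel_one (n := n) (Or.inl ⟨a, b, ha1, h, hbn, rfl⟩)
    simp only [map_mul, map_inv, ← σb_eq_mk] at hc
    have h2 := mul_inv_eq_one.mp hc
    calc σb n a * σb n b = (σb n a * σb n b * (σb n a)⁻¹) * σb n a := by group
      _ = σb n b * σb n a := by exact congrArg (· * σb n a) h2
  · have hc := braid_rel_one (n := n) (Or.inl ⟨b, a, hb1, h, han, rfl⟩)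
    simp only [map_mul, map_inv, ← σb_eq_mk] at hc
    have h2 := mul_inv_eq_one.mp hc
    calc σb n a * σb n b = (σb n b * σb n a * (σb n b)⁻¹) * σb n b := by exact (congrArg (· * σb n b) h2).symm
      _ = σb n b * σb n a := by group

/-- Descending product `σ_{b+k-1} σ_{b+k-2} ⋯ σ_b`. -/
def descP (n : ℕ) : ℕ → ℕ → BraidGroup n
  | 0, _ => 1
  | k+1, b => σb n (b+k) * descP n k b

lemma descP_zero (n b : ℕ) : descP n 0 b = 1 := rfl

lemma descP_succ (n k b : ℕ) : descP n (k+1) b = σb n (b+k) * descP n k b := rfl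

lemma descP_split (n a c b : ℕ) :
    descP n (a + c) b = descP n c (b + a) * descP n a b := by
  induction c with
  | zero => rw [descP_zero]; group
  | succ c ih =>
      have h1 : a + (c + 1) = (a + c) + 1 := by omega
      rw [h1, descP_succ, ih, descP_succ]
      have h2 : b + a + c = b + (a + c) := by omega
      rw [h2, mul_assoc]

lemma descP_pop (n k b : ℕ) : descP n (k+1) b = descP n k (b+1) * σb n b := by
  have h1 : k + 1 = 1 + k := by omega
  rw [h1, descP_split, descP_succ, descP_zero]
  group

lemma chain_eq_descP_aux (n : ℕ) : ∀ k b : ℕ,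
    ((List.range' b k).reverse.map (σb n)).prod = descP n k b := by
  intro k
  induction k with
  | zero => intro b; rfl
  | succ k ih =>
      intro b
      rw [List.range'_succ, List.reverse_cons, List.map_append, List.prod_append,
        ih (b+1), descP_pop]
      simp

lemma chain_eq (n i j : ℕ) : chain n i j = descP n (i-1-j) (j+1) :=
  chain_eq_descP_aux n (i-1-j) (j+1)

lemma bdelta_eq (n : ℕ) : bdelta n = descP n (n-1) 1 :=
  chain_eq_descP_aux n (n-1) 1

/-- A single generator commutes with a descending product that avoids it. -/
lemma sigma_comm_descP (n m : ℕ) : ∀ k b : ℕ, 1 ≤ b → b + k ≤ n → 1 ≤ m → m + 1 ≤ n →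
    (m + 2 ≤ b ∨ b + k + 1 ≤ m) →
    σb n m * descP n k b = descP n k b * σb n m := by
  intro k
  induction k with
  | zero => intro b _ _ _ _ _; rw [descP_zero]; group
  | succ k ih =>
      intro b hb hbk hm hmn h
      rw [descP_succ, ← mul_assoc, sigma_comm n m (b+k) hm (by omega) hmn (by omega)
        (by omega), mul_assoc, ih b hb (by omega) hm hmn (by omega), ← mul_assoc]

/-- helper: from the braid relation, `a⁻¹ b a = b a b⁻¹`. -/
lemma conj_braid₁ {G : Type*} [Group G] {a b : G} (h : a*b*a = b*a*b) :
    a⁻¹ * b * a = b * a * b⁻¹ := by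
  calc a⁻¹*b*a = a⁻¹*(b*a*b)*b⁻¹ := by group
    _ = a⁻¹*(a*b*a)*b⁻¹ := by rw [h]
    _ = b*a*b⁻¹ := by group

/-- helper: from the braid relation, `b⁻¹ a b a = a b`. -/
lemma conj_braid₂ {G : Type*} [Group G] {a b : G} (h : a*b*a = b*a*b) :
    b⁻¹ * a * b * a = a * b := by
  calc b⁻¹*a*b*a = b⁻¹*(a*b*a) := by group
    _ = b⁻¹*(b*a*b) := by rw [h]
    _ = a*b := by group

/-- Conjugation by `δ` shifts a single Artin generator. -/
lemma conj_sigma (n k : ℕ) (h1 : 1 ≤ k) (h2 : k + 2 ≤ n) :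
    (bdelta n)⁻¹ * σb n k * bdelta n = σb n (k+1) := by
  have hd : bdelta n = descP n (n-2-k) (k+2) *
      (σb n (k+1) * (σb n k * descP n (k-1) 1)) := by
    rw [bdelta_eq]
    have h3 := descP_split n (k+1) (n-2-k) 1
    rw [show (k+1) + (n-2-k) = n-1 from by omega,
        show (1:ℕ) + (k+1) = k+2 from by omega] at h3
    rw [h3]
    congr 1
    have h4 := descP_succ n k 1
    rw [show (1:ℕ) + k = k+1 from by omega] at h4
    rw [h4]
    congr 1
    have h5 := descP_succ n (k-1) 1
    rw [show (k-1) + 1 = k from by omega, show (1:ℕ) + (k-1) = k from by omega] at h5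
    exact h5
  set s1 := σb n k with hs1
  set s2 := σb n (k+1) with hs2
  set A := descP n (n-2-k) (k+2) with hA
  set B := descP n (k-1) 1 with hB
  have hcA : s1 * A = A * s1 :=
    sigma_comm_descP n k (n-2-k) (k+2) (by omega) (by omega) h1 (by omega) (Or.inl (by omega))
  have hA' : A⁻¹ * s1 * A = s1 := by rw [mul_assoc, hcA]; group
  have hcB : s2 * B = B * s2 :=
    sigma_comm_descP n (k+1) (k-1) 1 (by omega) (by omega) (by omega) (by omega)
      (Or.inr (by omega))
  have hbr : s2⁻¹ * s1 * s2 * s1 = s1 * s2 :=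
    conj_braid₂ (braid_rel n k h1 h2)
  rw [hd]
  calc (A*(s2*(s1*B)))⁻¹ * s1 * (A*(s2*(s1*B)))
      = B⁻¹ * (s1⁻¹ * (s2⁻¹ * (A⁻¹ * s1 * A) * s2 * s1)) * B := by group
    _ = B⁻¹ * (s1⁻¹ * (s2⁻¹ * s1 * s2 * s1)) * B := by rw [hA']
    _ = B⁻¹ * (s1⁻¹ * (s1 * s2)) * B := by rw [hbr]
    _ = B⁻¹ * (s2 * B) := by group
    _ = B⁻¹ * (B * s2) := by rw [hcB]
    _ = s2 := by group

/-- Conjugation by `δ` shifts descending products. -/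
lemma conj_descP (n : ℕ) : ∀ k b : ℕ, 1 ≤ b → b + k + 1 ≤ n →
    (bdelta n)⁻¹ * descP n k b * bdelta n = descP n k (b+1) := by
  intro k
  induction k with
  | zero => intro b _ _; rw [descP_zero, descP_zero]; group
  | succ k ih =>
      intro b hb hbk
      rw [descP_succ]
      have step : (bdelta n)⁻¹ * (σb n (b+k) * descP n k b) * bdelta n =
          ((bdelta n)⁻¹ * σb n (b+k) * bdelta n) *
            ((bdelta n)⁻¹ * descP n k b * bdelta n) := by group
      rw [step, conj_sigma n (b+k) (by omega) (by omega), ih b hb (by omega), descP_succ,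
        show b + 1 + k = b + k + 1 from by omega]

/-- The two expressions for a band generator:
`(σ_m ⋯ σ_1)⁻¹ σ_{m+1} (σ_m ⋯ σ_1) = (σ_{m+1} ⋯ σ_2) σ_1 (σ_{m+1} ⋯ σ_2)⁻¹`. -/
lemma band_alt (n : ℕ) : ∀ m : ℕ, m + 2 ≤ n →
    (descP n m 1)⁻¹ * σb n (m+1) * descP n m 1 =
      descP n m 2 * σb n 1 * (descP n m 2)⁻¹ := by
  intro m
  induction m with
  | zero => intro _; rw [descP_zero, descP_zero]; group
  | succ m ih =>
      intro h
      have e1 : m + 1 + 1 = m + 2 := by omega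
      rw [e1]
      have hDs : descP n (m+1) 1 = σb n (m+1) * descP n m 1 := by
        rw [descP_succ, show (1:ℕ) + m = m + 1 from by omega]
      have hDs2 : descP n (m+1) 2 = σb n (m+2) * descP n m 2 := by
        rw [descP_succ, show (2:ℕ) + m = m + 2 from by omega]
      rw [hDs, hDs2]
      set D := descP n m 1 with hD
      set E := descP n m 2 with hE
      set s1 := σb n (m+1) with hs1
      set s2 := σb n (m+2) with hs2
      have hbr : s1⁻¹ * s2 * s1 = s2 * s1 * s2⁻¹ := by
        have hb := braid_rel n (m+1) (by omega) (by omega)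
        rw [e1] at hb
        exact conj_braid₁ hb
      have hcomm : Commute s2 D :=
        sigma_comm_descP n (m+2) m 1 (by omega) (by omega) (by omega) (by omega)
          (Or.inr (by omega))
      calc (s1 * D)⁻¹ * s2 * (s1 * D)
          = D⁻¹ * (s1⁻¹ * s2 * s1) * D := by group
        _ = D⁻¹ * (s2 * s1 * s2⁻¹) * D := by rw [hbr]
        _ = (D⁻¹ * s2) * s1 * (s2⁻¹ * D) := by group
        _ = (s2 * D⁻¹) * s1 * (D * s2⁻¹) := by
              rw [hcomm.symm.inv_left.eq, hcomm.inv_left.eq]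
        _ = s2 * (D⁻¹ * s1 * D) * s2⁻¹ := by group
        _ = s2 * (E * σb n 1 * E⁻¹) * s2⁻¹ := by rw [ih (by omega)]
        _ = s2 * E * σb n 1 * (s2 * E)⁻¹ := by group

/-- conjugation by `δ` shifts band generators: `δ⁻¹ (i,j) δ = (i+1, j+1)`,
indices taken mod `n` with representatives in `{1,…,n}` and the pair reordered to be
decreasing (so for `i = n` the result is `(j+1, 1)`). -/
theorem delta_conj_band (n i j : ℕ) (hj : 1 ≤ j) (hji : j < i) (hin : i ≤ n) :
    (bdelta n)⁻¹ * band n i j * bdelta n =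
      if i < n then band n (i + 1) (j + 1) else band n (j + 1) 1 := by
  have step : ∀ g d a : BraidGroup n, g⁻¹ * (d * a * d⁻¹) * g =
      (g⁻¹ * d * g) * (g⁻¹ * a * g) * (g⁻¹ * d * g)⁻¹ := by intro g d a; group
  rcases lt_or_ge i n with hlt | hge
  · rw [if_pos hlt]
    simp only [band, chain_eq]
    rw [show i + 1 - 1 - (j+1) = i - 1 - j from by omega]
    rw [step, conj_descP n (i-1-j) (j+1) (by omega) (by omega),
      conj_sigma n j hj (by omega)]
  · have hi : i = n := le_antisymm hin hge
    rw [if_neg (by omega)]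
    rw [hi]
    simp only [band, chain_eq]
    rw [show j + 1 - 1 - 1 = j - 1 from by omega, show (1:ℕ) + 1 = 2 from rfl]
    have hsplit : bdelta n = descP n (n-1-j) (j+1) * descP n j 1 := by
      rw [bdelta_eq]
      have h3 := descP_split n j (n-1-j) 1
      rw [show j + (n-1-j) = n-1 from by omega,
          show (1:ℕ) + j = j + 1 from by omega] at h3
      exact h3
    have hBj : descP n j 1 = σb n j * descP n (j-1) 1 := by
      have h9 := descP_succ n (j-1) 1
      rw [show (j-1) + 1 = j from by omega, show (1:ℕ) + (j-1) = j from by omega] at h9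
      exact h9
    rw [hsplit]
    set C := descP n (n-1-j) (j+1) with hC
    calc (C * descP n j 1)⁻¹ * (C * σb n j * C⁻¹) * (C * descP n j 1)
        = (descP n j 1)⁻¹ * σb n j * descP n j 1 := by group
      _ = (σb n j * descP n (j-1) 1)⁻¹ * σb n j * (σb n j * descP n (j-1) 1) := by
            rw [hBj]
      _ = (descP n (j-1) 1)⁻¹ * σb n j * descP n (j-1) 1 := by group
      _ = descP n (j-1) 2 * σb n 1 * (descP n (j-1) 2)⁻¹ := by
            have hba := band_alt n (j-1) (by omega)
            rw [show (j-1) + 1 = j from by omega] at hba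
            exact hba
end

section
/- In the band presentation of B_n, if pairs (i,j) and (k,l) with i>j and k>l are non-interlocking, i.e. (i-k)(i-l)(j-k)(j-l) > 0, then the band generators (i,j) and (k,l) commute. -/
namespace BraidAux

lemma mk_rel {n : ℕ} {r : FreeGroup ℕ} (hr : r ∈ braidRels n) :
    PresentedGroup.mk (braidRels n) r = (1 : BraidGroup n) :=
  (QuotientGroup.eq_one_iff _).mpr (Subgroup.subset_normalClosure hr)

lemma σb_eq (n k : ℕ) : σb n k = PresentedGroup.mk (braidRels n) (FreeGroup.of k) := rfl

lemma σ_one {n k : ℕ} (hk : k = 0 ∨ n ≤ k) : σb n k = 1 :=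
  mk_rel (Or.inr (Or.inr ⟨k, hk, rfl⟩))

lemma σ_comm {n a b : ℕ} (hab : a + 2 ≤ b) : Commute (σb n a) (σb n b) := by
  rcases Nat.eq_zero_or_pos a with ha | ha
  · rw [σ_one (Or.inl ha)]; exact Commute.one_left _
  rcases le_or_gt (b + 1) n with hb | hb
  · have h1 := mk_rel (n := n) (Or.inl ⟨a, b, ha, hab, hb, rfl⟩)
    rw [map_mul, map_mul, map_mul, map_inv, map_inv, ← σb_eq, ← σb_eq] at h1
    rw [← commutatorElement_eq_one_iff_commute]
    exact h1
  · rw [σ_one (n := n) (k := b) (Or.inr (by omega))]; exact Commute.one_right _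

lemma braid_rel {n a : ℕ} (ha : 1 ≤ a) (han : a + 2 ≤ n) :
    σb n a * σb n (a+1) * σb n a = σb n (a+1) * σb n a * σb n (a+1) := by
  have h1 := mk_rel (n := n) (Or.inr (Or.inl ⟨a, ha, han, rfl⟩))
  rw [map_mul, map_mul, map_inv, map_mul, map_mul, map_mul, ← σb_eq, ← σb_eq] at h1
  replace h1 := mul_inv_eq_one.mp h1
  exact h1

lemma chain_eq_one {n i j : ℕ} (h : i ≤ j + 1) : chain n i j = 1 := by
  unfold chain
  have : i - 1 - j = 0 := by omega
  simp [this]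

lemma chain_succ {n k j : ℕ} (h : j < k) : chain n (k+1) j = σb n k * chain n k j := by
  unfold chain
  have h1 : k + 1 - 1 - j = (k - 1 - j) + 1 := by omega
  have h2 : j + 1 + 1 * (k - 1 - j) = k := by omega
  rw [h1, List.range'_concat, h2, List.reverse_append, List.reverse_singleton,
    List.singleton_append, List.map_cons, List.prod_cons]

lemma commute_chain {n i j : ℕ} (x : BraidGroup n)
    (H : ∀ m, j + 1 ≤ m → m < i → Commute x (σb n m)) : Commute x (chain n i j) := by
  unfold chain
  apply Commute.list_prod_right
  intro y hy
  simp only [List.mem_map, List.mem_reverse] at hy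
  obtain ⟨m, hm, rfl⟩ := hy
  rw [List.mem_range'_1] at hm
  exact H m hm.1 (by omega)

lemma commute_band {n i j : ℕ} (x : BraidGroup n) (hji : j < i)
    (H : ∀ m, j ≤ m → m < i → Commute x (σb n m)) : Commute x (band n i j) := by
  have hc : Commute x (chain n i j) := commute_chain x (fun m h1 h2 => H m (by omega) h2)
  unfold band
  exact (hc.mul_right (H j le_rfl hji)).mul_right hc.inv_right

lemma shift {n l : ℕ} : ∀ k, k ≤ n → 1 ≤ l → ∀ m, l + 1 ≤ m → m + 2 ≤ k →
    σb n m * chain n k l = chain n k l * σb n (m+1) := by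
  intro k
  induction k with
  | zero => intro _ _ m _ h; omega
  | succ k IH =>
    intro hkn hl m hlm hmk
    have hjk : l < k := by omega
    rw [chain_succ hjk]
    rcases Nat.lt_or_ge (m + 2) (k + 1) with hcase | hcase
    · have h1 : Commute (σb n m) (σb n k) := σ_comm (by omega)
      rw [← mul_assoc, h1.eq, mul_assoc, IH (by omega) hl m hlm (by omega), mul_assoc]
    · have hk : k = m + 1 := by omega
      subst hk
      rw [chain_succ (show l < m by omega)]
      have hbr : σb n m * σb n (m+1) * σb n m = σb n (m+1) * σb n m * σb n (m+1) :=
        braid_rel (by omega) (by omega)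
      have hcc : Commute (σb n (m+1)) (chain n m l) :=
        commute_chain _ (fun p hp1 hp2 => (σ_comm (show p + 2 ≤ m + 1 by omega)).symm)
      calc σb n m * (σb n (m+1) * (σb n m * chain n m l))
          = (σb n m * σb n (m+1) * σb n m) * chain n m l := by
            rw [mul_assoc, mul_assoc]
        _ = σb n (m+1) * σb n m * (σb n (m+1) * chain n m l) := by
            rw [hbr, mul_assoc]
        _ = σb n (m+1) * (σb n m * chain n m l) * σb n (m+1) := by
            rw [hcc.eq, ← mul_assoc, ← mul_assoc, mul_assoc _ _ (σb n (m+1))]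

lemma σ_comm_band {n k l m : ℕ} (hl : 1 ≤ l) (hkn : k ≤ n) (h1 : l + 1 ≤ m)
    (h2 : m + 2 ≤ k) : Commute (σb n m) (band n k l) := by
  have hs : σb n m * chain n k l = chain n k l * σb n (m+1) :=
    shift k hkn hl m h1 h2
  have hs' : σb n (m+1) * (chain n k l)⁻¹ = (chain n k l)⁻¹ * σb n m := by
    apply mul_left_cancel (a := chain n k l)
    rw [← mul_assoc, ← hs, mul_assoc, mul_inv_cancel, mul_one, ← mul_assoc,
      mul_inv_cancel, one_mul]
  have hll : σb n (m+1) * σb n l = σb n l * σb n (m+1) :=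
    ((σ_comm (show l + 2 ≤ m + 1 by omega)).symm).eq
  show σb n m * (chain n k l * σb n l * (chain n k l)⁻¹)
      = (chain n k l * σb n l * (chain n k l)⁻¹) * σb n m
  calc σb n m * (chain n k l * σb n l * (chain n k l)⁻¹)
      = (σb n m * chain n k l) * (σb n l * (chain n k l)⁻¹) := by
        simp only [mul_assoc]
    _ = chain n k l * ((σb n (m+1) * σb n l) * (chain n k l)⁻¹) := by
        rw [hs]; simp only [mul_assoc]
    _ = chain n k l * (σb n l * (σb n (m+1) * (chain n k l)⁻¹)) := by
        rw [hll]; simp only [mul_assoc]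
    _ = (chain n k l * σb n l * (chain n k l)⁻¹) * σb n m := by
        rw [hs']; simp only [mul_assoc]

lemma comm_disjoint {n i j k l : ℕ} (hji : j < i) (hlk : l < k) (hkj : k < j) :
    Commute (band n i j) (band n k l) := by
  apply commute_band (band n i j) hlk
  intro m hm1 hm2
  exact (commute_band (σb n m) hji
    (fun p hp1 hp2 => σ_comm (show m + 2 ≤ p by omega))).symm

lemma comm_nested {n i j k l : ℕ} (hl : 1 ≤ l) (hkn : k ≤ n) (hlj : l < j)
    (hji : j < i) (hik : i < k) : Commute (band n i j) (band n k l) := by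
  refine (commute_band (band n k l) hji ?_).symm
  intro m hm1 hm2
  exact (σ_comm_band hl hkn (by omega) (by omega)).symm

end BraidAux

/-- non-interlocking band generators commute: if
`(i-k)(i-l)(j-k)(j-l) > 0` then `(i,j)(k,l) = (k,l)(i,j)` in `B_n`. -/
theorem band_comm_of_nonInterlocking (n i j k l : ℕ)
    (hj : 1 ≤ j) (hji : j < i) (hin : i ≤ n)
    (hl : 1 ≤ l) (hlk : l < k) (hkn : k ≤ n)
    (h : 0 < ((i : ℤ) - k) * ((i : ℤ) - l) * ((j : ℤ) - k) * ((j : ℤ) - l)) :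
    band n i j * band n k l = band n k l * band n i j := by
  have H : k < j ∨ i < l ∨ (l < j ∧ i < k) ∨ (j < l ∧ k < i) := by
    by_contra hc
    push_neg at hc
    obtain ⟨h1, h2, h3, h4⟩ := hc
    have hji' : (j : ℤ) < i := by exact_mod_cast hji
    have hlk' : (l : ℤ) < k := by exact_mod_cast hlk
    have h1' : (j : ℤ) ≤ k := by exact_mod_cast h1
    have h2' : (l : ℤ) ≤ i := by exact_mod_cast h2
    rcases lt_trichotomy j l with hjl | hjl | hjl
    · have h4' : (i : ℤ) ≤ k := by exact_mod_cast h4 hjl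
      have hjl' : (j : ℤ) < l := by exact_mod_cast hjl
      have hAB : ((i : ℤ) - k) * ((i : ℤ) - l) ≤ 0 :=
        mul_nonpos_iff.2 (Or.inr ⟨by linarith, by linarith⟩)
      have hABC : 0 ≤ ((i : ℤ) - k) * ((i : ℤ) - l) * ((j : ℤ) - k) := by
        have := mul_nonneg (neg_nonneg.2 hAB)
          (neg_nonneg.2 (show ((j : ℤ) - k) ≤ 0 by linarith))
        rwa [neg_mul_neg] at this
      nlinarith [mul_nonneg hABC (show (0:ℤ) ≤ (l : ℤ) - j by linarith)]
    · subst hjl; simp at h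
    · have h3' : (k : ℤ) ≤ i := by exact_mod_cast h3 hjl
      have hjl' : (l : ℤ) < j := by exact_mod_cast hjl
      have hAB : 0 ≤ ((i : ℤ) - k) * ((i : ℤ) - l) :=
        mul_nonneg (by linarith) (by linarith)
      have hABC : ((i : ℤ) - k) * ((i : ℤ) - l) * ((j : ℤ) - k) ≤ 0 :=
        mul_nonpos_iff.2 (Or.inl ⟨hAB, by linarith⟩)
      nlinarith [mul_nonneg (neg_nonneg.2 hABC)
        (show (0:ℤ) ≤ (j : ℤ) - l by linarith)]
  rcases H with hc | hc | ⟨hc1, hc2⟩ | ⟨hc1, hc2⟩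
  · exact (BraidAux.comm_disjoint hji hlk hc).eq
  · exact ((BraidAux.comm_disjoint hlk hji hc).symm).eq
  · exact (BraidAux.comm_nested hl hkn hc1 hji hc2).eq
  · exact ((BraidAux.comm_nested hj hin hc1 hlk hc2).symm).eq
end

section
/- In B_n, the descending cycles satisfy δ_{i,j} δ_{h,k} = δ_{h-1,k-1} δ_{i,j} whenever i > h > k > j. -/
lemma rel_eq_one {n : ℕ} {r : FreeGroup ℕ} (hr : r ∈ braidRels n) :
    (PresentedGroup.mk (braidRels n) r : BraidGroup n) = 1 :=
  (QuotientGroup.eq_one_iff r).2 (Subgroup.subset_normalClosure hr)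

lemma σb_kill {n k : ℕ} (h : k = 0 ∨ n ≤ k) : σb n k = 1 := by
  rw [σb_eq_mk]
  exact rel_eq_one (Or.inr (Or.inr ⟨k, h, rfl⟩))

lemma σb_comm_of {n a b : ℕ} (h1 : 1 ≤ a) (h2 : a + 2 ≤ b) (h3 : b + 1 ≤ n) :
    σb n a * σb n b = σb n b * σb n a := by
  have := rel_eq_one (n := n) (Or.inl ⟨a, b, h1, h2, h3, rfl⟩)
  simp only [map_mul, map_inv, ← σb_eq_mk] at this
  change σb n a * σb n b * (σb n a)⁻¹ * (σb n b)⁻¹ = (1 : BraidGroup n) at this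
  rw [mul_inv_eq_one, mul_inv_eq_iff_eq_mul] at this
  exact this

lemma σb_comm {n a b : ℕ} (h2 : a + 2 ≤ b) :
    σb n a * σb n b = σb n b * σb n a := by
  rcases Nat.eq_zero_or_pos a with ha | ha
  · rw [σb_kill (Or.inl ha)]; simp
  rcases le_or_gt (b + 1) n with hb | hb
  · exact σb_comm_of ha h2 hb
  · rw [σb_kill (Or.inr (by omega : n ≤ b))]; simp

lemma σb_comm' {n a b : ℕ} (h2 : b + 2 ≤ a) :
    σb n a * σb n b = σb n b * σb n a := (σb_comm h2).symm

lemma σb_braid {n a : ℕ} (h1 : 1 ≤ a) (h2 : a + 2 ≤ n) :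
    σb n a * σb n (a+1) * σb n a = σb n (a+1) * σb n a * σb n (a+1) := by
  have := rel_eq_one (n := n) (Or.inr (Or.inl ⟨a, h1, h2, rfl⟩))
  simp only [map_mul, map_inv, ← σb_eq_mk] at this
  rw [mul_inv_eq_one] at this
  exact this

/-- The descending cycle `δ_{p,q} = (p,p-1)(p-1,p-2)⋯(q+1,q)` in `B_n`. -/
def descCycle (n p q : ℕ) : BraidGroup n :=
  ((List.range' q (p - q)).reverse.map fun k => band n (k + 1) k).prod


lemma band_succ (n k : ℕ) : band n (k+1) k = σb n k := by
  unfold band chain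
  simp [show k+1-1-k = 0 by omega]

lemma descCycle_eq (n p q : ℕ) :
    descCycle n p q = ((List.range' q (p - q)).reverse.map (σb n)).prod := by
  unfold descCycle
  simp only [band_succ]

lemma descCycle_empty {n p q : ℕ} (h : p ≤ q) : descCycle n p q = 1 := by
  simp [descCycle, Nat.sub_eq_zero_of_le h]

lemma descCycle_peel' {n : ℕ} (p q : ℕ) (h : q ≤ p) :
    descCycle n (p+1) q = σb n p * descCycle n p q := by
  rw [descCycle_eq, descCycle_eq, show p+1-q = (p-q)+1 by omega, List.range'_concat,
    List.reverse_append, show q + 1 * (p-q) = p by omega]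
  simp

lemma descCycle_blockcomm {n : ℕ} (t q : ℕ) :
    ∀ p, p + 1 ≤ t → σb n t * descCycle n p q = descCycle n p q * σb n t := by
  intro p
  induction p with
  | zero => intro _; simp [descCycle_empty (Nat.zero_le q)]
  | succ p ih =>
    intro h
    rcases le_or_gt (p+1) q with hle | hlt
    · simp [descCycle_empty hle]
    · rw [descCycle_peel' p q (by omega), ← mul_assoc,
        σb_comm' (show p+2 ≤ t by omega), mul_assoc, ih (by omega), ← mul_assoc]

lemma descCycle_shift_one {n : ℕ} (q s : ℕ) (hq : 1 ≤ q) (hqs : q ≤ s) :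
    ∀ p, s + 2 ≤ p → p ≤ n →
      descCycle n p q * σb n (s+1) = σb n s * descCycle n p q := by
  intro p
  induction p with
  | zero => intro h1 _; omega
  | succ p ih =>
    intro h1 h2
    rcases eq_or_lt_of_le h1 with heq | hlt
    · have hp : p = s + 1 := by omega
      subst hp
      rw [descCycle_peel' (s+1) q (by omega), descCycle_peel' s q (by omega)]
      calc σb n (s+1) * (σb n s * descCycle n s q) * σb n (s+1)
          = σb n (s+1) * σb n s * (descCycle n s q * σb n (s+1)) := by group
        _ = σb n (s+1) * σb n s * (σb n (s+1) * descCycle n s q) := by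
              rw [← descCycle_blockcomm (s+1) q s (le_refl _)]
        _ = (σb n (s+1) * σb n s * σb n (s+1)) * descCycle n s q := by group
        _ = (σb n s * σb n (s+1) * σb n s) * descCycle n s q := by
              rw [← σb_braid (by omega) (by omega)]
        _ = σb n s * (σb n (s+1) * (σb n s * descCycle n s q)) := by group
    · rw [descCycle_peel' p q (by omega), mul_assoc, ih (by omega) (by omega),
        ← mul_assoc, σb_comm' (show s+2 ≤ p by omega), mul_assoc]

lemma descCycle_move {n : ℕ} (i j : ℕ) (hj : 1 ≤ j) (hin : i ≤ n) (k : ℕ) (hjk : j < k) :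
    ∀ h, k ≤ h → h ≤ i →
      descCycle n i j * descCycle n h k = descCycle n (h-1) (k-1) * descCycle n i j := by
  intro h
  induction h with
  | zero => intro h1 _; omega
  | succ h ih =>
    intro h1 h2
    rcases eq_or_lt_of_le h1 with heq | hlt
    · rw [← heq]
      rw [descCycle_empty (le_refl k), descCycle_empty (show k - 1 ≤ k - 1 from le_refl _)]
      simp
    · have hk : k ≤ h := by omega
      have hDσ : descCycle n i j * σb n h = σb n (h-1) * descCycle n i j := by
        have := descCycle_shift_one j (h-1) hj (by omega) i (by omega) hin
        rwa [show h-1+1 = h by omega] at this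
      rw [descCycle_peel' h k hk, Nat.add_sub_cancel]
      calc descCycle n i j * (σb n h * descCycle n h k)
          = (descCycle n i j * σb n h) * descCycle n h k := by group
        _ = σb n (h-1) * (descCycle n i j * descCycle n h k) := by rw [hDσ]; group
        _ = σb n (h-1) * (descCycle n (h-1) (k-1) * descCycle n i j) := by
              rw [ih hk (by omega)]
        _ = (σb n (h-1) * descCycle n (h-1) (k-1)) * descCycle n i j := by group
        _ = descCycle n h (k-1) * descCycle n i j := by
              rw [show h = (h-1)+1 by omega, descCycle_peel' (h-1) (k-1) (by omega),
                show h-1+1-1 = h-1 by omega]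


/-- `δ_{i,j} δ_{h,k} = δ_{h-1,k-1} δ_{i,j}` whenever `i > h > k > j`. -/
theorem descCycle_shift (n i j h k : ℕ)
    (hj : 1 ≤ j) (hjk : j < k) (hkh : k < h) (hhi : h < i) (hin : i ≤ n) :
    descCycle n i j * descCycle n h k = descCycle n (h - 1) (k - 1) * descCycle n i j :=
  descCycle_move i j hj hin k hjk h (le_of_lt hkh) (le_of_lt hhi)
end

section
/- Let W be a word in band generators of B_P of length P+N-1 whose induced permutation consists of one (P-N)-cycle and N fixed points (the conditions of an extended boundary word). If W contains two adjacent mutually inverse letters, then the freely reduced word W', regarded after deleting one unused index as a word in band generators of B_{P-1}, has length (P-1)+(N-1)-1 and induced permutation consisting of one (P-N)-cycle and N-1 fixed points. -/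
/-- The permutation induced by a word (list of letters, each letter already a
permutation): the strand convention applies the first letter first, so the word
`[w₁, …, w_m]` induces `w_m ∘ ⋯ ∘ w₁`. -/
def wordPerm (l : List (Equiv.Perm ℕ)) : Equiv.Perm ℕ := l.reverse.prod

/-- The transposition induced by the Artin generator `σ_k`. -/
def permσ (k : ℕ) : Equiv.Perm ℕ := Equiv.swap k (k + 1)

/-- The Artin word `(σ_{i-1} ⋯ σ_{j+1}) σ_j (σ_{i-1} ⋯ σ_{j+1})⁻¹` defining the band
generator `(i,j)`, read letter by letter as transpositions (inverses of the
transpositions are themselves). -/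
def bandWord (i j : ℕ) : List (Equiv.Perm ℕ) :=
  ((List.range' (j + 1) (i - 1 - j)).reverse.map permσ) ++ [permσ j] ++
    ((List.range' (j + 1) (i - 1 - j)).map permσ)

/-- The permutation induced by the band generator `(i,j)`. -/
def bandPerm (i j : ℕ) : Equiv.Perm ℕ := wordPerm (bandWord i j)

/-- The permutation induced by a signed word in band generators (signs are irrelevant
to the induced permutation). -/
def signedWordPerm (L : List ((ℕ × ℕ) × Bool)) : Equiv.Perm ℕ :=
  wordPerm (L.map fun x => Equiv.swap x.1.1 x.1.2)

/-- `π` consists of one `(P-N)`-cycle and `N` fixed points on `{1,…,P}`. -/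
def CycleCond (P N : ℕ) (π : Equiv.Perm ℕ) : Prop :=
  π.IsCycle ∧ (∀ x : ℕ, π x ≠ x → x ∈ Finset.Icc 1 P) ∧
    ((Finset.Icc 1 P).filter fun x => π x ≠ x).card = P - N

/-- Renumbering of indices after deleting the index `m`: indices above `m` drop by 1. -/
def dropIdx (m a : ℕ) : ℕ := if m < a then a - 1 else a

namespace FreeRedAux

/-- Lift index: inverse of `dropIdx m` away from `m`. -/
def lft (m y : ℕ) : ℕ := if m ≤ y then y + 1 else y

lemma drop_lft (m y : ℕ) : dropIdx m (lft m y) = y := by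
  unfold dropIdx lft; split <;> split <;> omega

lemma lft_ne (m y : ℕ) : lft m y ≠ m := by
  unfold lft; split <;> omega

lemma lft_drop {m a : ℕ} (h : a ≠ m) : lft m (dropIdx m a) = a := by
  unfold dropIdx lft; split <;> split <;> omega

lemma drop_inj {m a b : ℕ} (ha : a ≠ m) (hb : b ≠ m)
    (h : dropIdx m a = dropIdx m b) : a = b := by
  unfold dropIdx at h; split at h <;> split at h <;> omega

lemma lft_inj {m y z : ℕ} (h : lft m y = lft m z) : y = z := by
  unfold lft at h; split at h <;> split at h <;> omega

lemma lft_swap {m a b : ℕ} (ha : a ≠ m) (hb : b ≠ m) (y : ℕ) :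
    lft m (Equiv.swap (dropIdx m a) (dropIdx m b) y) = Equiv.swap a b (lft m y) := by
  rcases eq_or_ne y (dropIdx m a) with h | h
  · subst h
    rw [Equiv.swap_apply_left, lft_drop hb, lft_drop ha, Equiv.swap_apply_left]
  · rcases eq_or_ne y (dropIdx m b) with h2 | h2
    · subst h2
      rw [Equiv.swap_apply_right, lft_drop ha, lft_drop hb, Equiv.swap_apply_right]
    · rw [Equiv.swap_apply_of_ne_of_ne h h2, Equiv.swap_apply_of_ne_of_ne]
      · intro he; exact h (by rw [← he, drop_lft])
      · intro he; exact h2 (by rw [← he, drop_lft])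

lemma swp_nil : signedWordPerm [] = 1 := by
  simp [signedWordPerm, wordPerm]

lemma swp_cons (x : (ℕ × ℕ) × Bool) (L : List ((ℕ × ℕ) × Bool)) :
    signedWordPerm (x :: L) = signedWordPerm L * Equiv.swap x.1.1 x.1.2 := by
  simp [signedWordPerm, wordPerm]

lemma conj_apply (m : ℕ) (L : List ((ℕ × ℕ) × Bool))
    (h : ∀ x ∈ L, x.1.1 ≠ m ∧ x.1.2 ≠ m) (y : ℕ) :
    signedWordPerm (L.map fun x => ((dropIdx m x.1.1, dropIdx m x.1.2), x.2)) y
      = dropIdx m (signedWordPerm L (lft m y)) := by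
  induction L generalizing y with
  | nil => simp [swp_nil, drop_lft]
  | cons x L ih =>
    have hx := h x (List.mem_cons_self)
    rw [List.map_cons, swp_cons, swp_cons, Equiv.Perm.mul_apply, Equiv.Perm.mul_apply,
      ih (fun z hz => h z (List.mem_cons_of_mem _ hz))]
    dsimp only
    rw [lft_swap hx.1 hx.2]

lemma fixes_m (m : ℕ) (L : List ((ℕ × ℕ) × Bool))
    (h : ∀ x ∈ L, x.1.1 ≠ m ∧ x.1.2 ≠ m) : signedWordPerm L m = m := by
  induction L with
  | nil => simp [swp_nil]
  | cons x L ih =>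
    have hx := h x (List.mem_cons_self)
    rw [swp_cons, Equiv.Perm.mul_apply,
      Equiv.swap_apply_of_ne_of_ne (Ne.symm hx.1) (Ne.symm hx.2),
      ih (fun z hz => h z (List.mem_cons_of_mem _ hz))]

lemma cancel (A B : List ((ℕ × ℕ) × Bool)) (g : ℕ × ℕ) (b : Bool) :
    signedWordPerm (A ++ [(g, b), (g, !b)] ++ B) = signedWordPerm (A ++ B) := by
  simp only [signedWordPerm, wordPerm, List.map_append, List.reverse_append, List.prod_append]
  congr 1
  simp [mul_assoc]

lemma perm_apply_inv_self (e : Equiv.Perm ℕ) (x : ℕ) : e (e⁻¹ x) = x :=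
  e.apply_symm_apply x

lemma inv_rel {m : ℕ} {p q : Equiv.Perm ℕ} (hpm : p m = m)
    (h : ∀ y, q y = dropIdx m (p (lft m y))) (y : ℕ) :
    q⁻¹ y = dropIdx m (p⁻¹ (lft m y)) := by
  have h1 : p⁻¹ (lft m y) ≠ m := by
    intro he
    have h2 : p (p⁻¹ (lft m y)) = p m := congrArg p he
    rw [perm_apply_inv_self, hpm] at h2
    exact lft_ne m y h2
  apply q.injective
  rw [perm_apply_inv_self, h, lft_drop h1, perm_apply_inv_self, drop_lft]

lemma pow_rel {m : ℕ} {p q : Equiv.Perm ℕ} (hpm : p m = m)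
    (h : ∀ y, q y = dropIdx m (p (lft m y))) (n : ℕ) (y : ℕ) :
    (q ^ n) y = dropIdx m ((p ^ n) (lft m y)) := by
  induction n generalizing y with
  | zero => simp [drop_lft]
  | succ k ih =>
    have h1 : p (lft m y) ≠ m := by
      intro he
      exact lft_ne m y (p.injective (he.trans hpm.symm))
    rw [pow_succ, pow_succ, Equiv.Perm.mul_apply, Equiv.Perm.mul_apply, h, ih, lft_drop h1]

lemma pow_fix {m : ℕ} {p : Equiv.Perm ℕ} (hpm : p m = m) (n : ℕ) : (p ^ n) m = m := by
  induction n with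
  | zero => simp
  | succ k ih => rw [pow_succ, Equiv.Perm.mul_apply, hpm, ih]

lemma zpow_rel {m : ℕ} {p q : Equiv.Perm ℕ} (hpm : p m = m)
    (h : ∀ y, q y = dropIdx m (p (lft m y))) (n : ℤ) (y : ℕ) :
    (q ^ n) y = dropIdx m ((p ^ n) (lft m y)) := by
  cases n with
  | ofNat k => simpa using pow_rel hpm h k y
  | negSucc k =>
    rw [zpow_negSucc, zpow_negSucc]
    exact inv_rel (pow_fix hpm (k + 1)) (pow_rel hpm h (k + 1)) y

end FreeRedAux

open FreeRedAux

/-- let `W` be a word in band generators of `B_P` of length `P+N-1`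
whose induced permutation is one `(P-N)`-cycle with `N` fixed points, containing two
adjacent mutually inverse letters `(g,b)(g,!b)`. Then the freely reduced word,
regarded after deleting an unused index `m` (renumbering all larger indices down by
one) as a word in band generators of `B_{P-1}`, has length `(P-1)+(N-1)-1` and induced
permutation one `(P-N)`-cycle with `N-1` fixed points. -/
theorem free_reduction (P N : ℕ) (A B : List ((ℕ × ℕ) × Bool)) (g : ℕ × ℕ) (b : Bool)
    (m : ℕ)
    (hval : ∀ x ∈ A ++ [(g, b), (g, !b)] ++ B, 1 ≤ x.1.2 ∧ x.1.2 < x.1.1 ∧ x.1.1 ≤ P)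
    (hlen : (A ++ [(g, b), (g, !b)] ++ B).length = P + N - 1)
    (hcyc : CycleCond P N (signedWordPerm (A ++ [(g, b), (g, !b)] ++ B)))
    (hm1 : 1 ≤ m) (hm2 : m ≤ P)
    (hunused : ∀ x ∈ A ++ B, x.1.1 ≠ m ∧ x.1.2 ≠ m) :
    ((A ++ B).map fun x => ((dropIdx m x.1.1, dropIdx m x.1.2), x.2)).length =
        (P - 1) + (N - 1) - 1 ∧
      (∀ x ∈ (A ++ B).map fun x => ((dropIdx m x.1.1, dropIdx m x.1.2), x.2),
        1 ≤ x.1.2 ∧ x.1.2 < x.1.1 ∧ x.1.1 ≤ P - 1) ∧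
      CycleCond (P - 1) (N - 1)
        (signedWordPerm ((A ++ B).map fun x => ((dropIdx m x.1.1, dropIdx m x.1.2), x.2))) := by
  have hvalAB : ∀ x ∈ A ++ B, 1 ≤ x.1.2 ∧ x.1.2 < x.1.1 ∧ x.1.1 ≤ P := by
    intro x hx
    apply hval
    simp only [List.mem_append] at hx ⊢
    tauto
  set π : Equiv.Perm ℕ := signedWordPerm (A ++ B) with hπdef
  set π' : Equiv.Perm ℕ :=
    signedWordPerm ((A ++ B).map fun x => ((dropIdx m x.1.1, dropIdx m x.1.2), x.2)) with hπ'def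
  have hcan : signedWordPerm (A ++ [(g, b), (g, !b)] ++ B) = π := cancel A B g b
  rw [hcan] at hcyc
  have H : ∀ y, π' y = dropIdx m (π (lft m y)) := conj_apply m (A ++ B) hunused
  have hπm : π m = m := fixes_m m (A ++ B) hunused
  have hπnem : ∀ a, a ≠ m → π a ≠ m := fun a ha he => ha (π.injective (he.trans hπm.symm))
  -- moved points correspondence
  have key : ∀ y, π' y ≠ y ↔ π (lft m y) ≠ lft m y := by
    intro y
    rw [H]
    constructor
    · intro h hc
      exact h (by rw [hc, drop_lft])
    · intro h hc
      exact h ((lft_drop (hπnem _ (lft_ne m y))).symm.trans (congrArg (lft m) hc))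
  have key2 : ∀ a, a ≠ m → (π' (dropIdx m a) ≠ dropIdx m a ↔ π a ≠ a) := by
    intro a ha
    rw [key, lft_drop ha]
  obtain ⟨hcyc1, hcyc2, hcyc3⟩ := hcyc
  obtain ⟨x₀, hx₀, hx₀c⟩ := hcyc1
  have hx₀m : x₀ ≠ m := fun he => hx₀ (by rw [he, hπm])
  -- cardinality of moved-point sets
  have hcard : ((Finset.Icc 1 (P - 1)).filter fun x => π' x ≠ x).card
      = ((Finset.Icc 1 P).filter fun x => π x ≠ x).card := by
    apply Finset.card_bij' (i := fun x _ => lft m x) (j := fun y _ => dropIdx m y)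
    · intro x hx
      simp only [Finset.mem_filter, Finset.mem_Icc] at hx ⊢
      have h1 : π (lft m x) ≠ lft m x := (key x).1 hx.2
      have h2 := hcyc2 _ h1
      simp only [Finset.mem_Icc] at h2
      exact ⟨h2, h1⟩
    · intro y hy
      simp only [Finset.mem_filter, Finset.mem_Icc] at hy ⊢
      have hym : y ≠ m := fun he => hy.2 (by rw [he, hπm])
      refine ⟨?_, (key2 y hym).2 hy.2⟩
      unfold dropIdx
      rcases hy.1 with ⟨h1, h2⟩
      split <;> omega
    · intro x _
      exact drop_lft m x
    · intro y hy
      simp only [Finset.mem_filter] at hy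
      have hym : y ≠ m := fun he => hy.2 (by rw [he, hπm])
      exact lft_drop hym
  have hmoved_sub : ((Finset.Icc 1 P).filter fun x => π x ≠ x) ⊆
      (Finset.Icc 1 P).erase m := by
    intro x hx
    simp only [Finset.mem_filter] at hx
    refine Finset.mem_erase.2 ⟨fun he => hx.2 (by rw [he, hπm]), hx.1⟩
  have hle : ((Finset.Icc 1 P).filter fun x => π x ≠ x).card ≤ P - 1 := by
    calc ((Finset.Icc 1 P).filter fun x => π x ≠ x).card
        ≤ ((Finset.Icc 1 P).erase m).card := Finset.card_le_card hmoved_sub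
      _ = (Finset.Icc 1 P).card - 1 :=
          Finset.card_erase_of_mem (Finset.mem_Icc.2 ⟨hm1, hm2⟩)
      _ = P - 1 := by rw [Nat.card_Icc]; omega
  have hge : 1 ≤ ((Finset.Icc 1 P).filter fun x => π x ≠ x).card := by
    apply Finset.card_pos.2
    exact ⟨x₀, Finset.mem_filter.2 ⟨hcyc2 _ hx₀, hx₀⟩⟩
  have hN1 : 1 ≤ N ∧ N < P := by
    constructor <;> omega
  refine ⟨?_, ?_, ?_, ?_, ?_⟩
  · -- length
    simp only [List.length_map, List.length_append] at hlen ⊢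
    simp only [List.length_cons, List.length_nil] at hlen
    omega
  · -- bounds
    intro x hx
    simp only [List.mem_map] at hx
    obtain ⟨a, ha, rfl⟩ := hx
    have h1 := hvalAB a ha
    have h2 := hunused a ha
    simp only [dropIdx]
    constructor
    · split <;> omega
    constructor
    · split <;> split <;> omega
    · split <;> omega
  · -- IsCycle
    refine ⟨dropIdx m x₀, ?_, ?_⟩
    · rw [key2 x₀ hx₀m]
      exact hx₀
    · intro z hz
      have hz' : π (lft m z) ≠ lft m z := (key z).1 hz
      obtain ⟨n, hn⟩ := hx₀c hz'
      refine ⟨n, ?_⟩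
      rw [zpow_rel hπm H n, lft_drop hx₀m, hn, drop_lft]
  · -- support in Icc 1 (P-1)
    intro x hx
    have h1 : π (lft m x) ≠ lft m x := (key x).1 hx
    have h2 := hcyc2 _ h1
    simp only [Finset.mem_Icc] at h2 ⊢
    have h3 := lft_ne m x
    unfold lft at h2 h3
    split at h2 <;> omega
  · -- cardinality
    rw [hcard, hcyc3]
    omega
end
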